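/- Let K be an infinite compact Hausdorff space, let L = K × Bool (Bool discrete), and let J : C(L) → C(L) be the swap operator (Jf)(x,b) = f(x,¬b). Then J is not a weak multiplier on C(L). -/

import Mathlib

open Filter Topology

/-- A bounded linear operator `T` on `C(K, ℝ)` is a *weak multiplier* if for every bounded
pairwise disjoint sequence `(e_n)` in `C(K, ℝ)` and every sequence `(x_n)` in `K` with
`e_n (x_n) = 0` for all `n`, one has `T (e_n) (x_n) → 0`. -/
def IsWeakMultiplier {K : Type*} [TopologicalSpace K] [CompactSpace K]
    (T : C(K, ℝ) →L[ℝ] C(K, ℝ)) : Prop :=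
  ∀ (e : ℕ → C(K, ℝ)) (x : ℕ → K),
    (∃ M : ℝ, ∀ n, ‖e n‖ ≤ M) →
    (∀ i j, i ≠ j → e i * e j = 0) →
    (∀ n, (e n) (x n) = 0) →
    Filter.Tendsto (fun n => (T (e n)) (x n)) Filter.atTop (nhds 0)

/-- An operator on `C(K, ℝ)` is *weakly compact* if the image of the closed unit ball has
compact closure in the weak topology. -/
def IsWeaklyCompactOp {K : Type*} [TopologicalSpace K] [CompactSpace K]
    (S : C(K, ℝ) →L[ℝ] C(K, ℝ)) : Prop :=
  IsCompact (closure ((toWeakSpace ℝ C(K, ℝ)) '' (S '' Metric.closedBall 0 1)))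

/-- An operator on `C(K, ℝ)` is a *weak multiplication* if it has the form `g•I + S` with
`g ∈ C(K, ℝ)` and `S` weakly compact. -/
def IsWeakMultiplication {K : Type*} [TopologicalSpace K] [CompactSpace K]
    (T : C(K, ℝ) →L[ℝ] C(K, ℝ)) : Prop :=
  ∃ (g : C(K, ℝ)) (S : C(K, ℝ) →L[ℝ] C(K, ℝ)),
    IsWeaklyCompactOp S ∧ T = ContinuousLinearMap.mul ℝ C(K, ℝ) g + S

/-- A subset `A` of a real vector space is *lineable* if `A ∪ {0}` contains an
infinite-dimensional subspace. -/
def Lineable {X : Type*} [AddCommGroup X] [Module ℝ X] (A : Set X) : Prop :=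
  ∃ W : Submodule ℝ X, ¬ FiniteDimensional ℝ W ∧ (W : Set X) ⊆ A ∪ {0}

/-- A subset `A` of a real normed space is *spaceable* if `A ∪ {0}` contains a closed
infinite-dimensional subspace. -/
def Spaceable {X : Type*} [NormedAddCommGroup X] [NormedSpace ℝ X] (A : Set X) : Prop :=
  ∃ W : Submodule ℝ X, IsClosed (W : Set X) ∧ ¬ FiniteDimensional ℝ W ∧ (W : Set X) ⊆ A ∪ {0}

/-- The swap operator `J` on `C(K × Bool, ℝ)`, `(J f)(x, b) = f (x, ¬b)`. -/
noncomputable def swapOp (K : Type*) [TopologicalSpace K] [CompactSpace K] :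
    C(K × Bool, ℝ) →L[ℝ] C(K × Bool, ℝ) :=
  LinearMap.mkContinuous
    { toFun := fun f => f.comp
        ⟨fun p => (p.1, !p.2),
          continuous_fst.prodMk ((continuous_of_discreteTopology (f := fun b : Bool => !b)).comp continuous_snd)⟩
      map_add' := fun f g => rfl
      map_smul' := fun c f => rfl }
    1
    (fun f => by
      rw [one_mul]
      exact (ContinuousMap.norm_le _ (norm_nonneg f)).mpr fun p => f.norm_coe_le_norm _)

@[simp] theorem swapOp_apply {K : Type*} [TopologicalSpace K] [CompactSpace K]
    (f : C(K × Bool, ℝ)) (p : K × Bool) : swapOp K f p = f (p.1, !p.2) := rfl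

/-- The restriction operator `π_i : C(K × Bool, ℝ) → C(K, ℝ)`, `π_i(f)(x) = f (x, i)`. -/
noncomputable def piOp (K : Type*) [TopologicalSpace K] [CompactSpace K] (i : Bool) :
    C(K × Bool, ℝ) →L[ℝ] C(K, ℝ) :=
  LinearMap.mkContinuous
    { toFun := fun f => f.comp ⟨fun x => (x, i), continuous_id.prodMk continuous_const⟩
      map_add' := fun f g => rfl
      map_smul' := fun c f => rfl }
    1
    (fun f => by
      rw [one_mul]
      exact (ContinuousMap.norm_le _ (norm_nonneg f)).mpr fun x => f.norm_coe_le_norm _)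

@[simp] theorem piOp_apply {K : Type*} [TopologicalSpace K] [CompactSpace K] (i : Bool)
    (f : C(K × Bool, ℝ)) (x : K) : piOp K i f x = f (x, i) := rfl

/-- The extension operator `σ_i : C(K, ℝ) → C(K × Bool, ℝ)`, `σ_i(g)(x, b) = g x` if `b = i`
and `0` otherwise. -/
noncomputable def sigmaOp (K : Type*) [TopologicalSpace K] [CompactSpace K] (i : Bool) :
    C(K, ℝ) →L[ℝ] C(K × Bool, ℝ) :=
  LinearMap.mkContinuous
    { toFun := fun g =>
        ⟨fun p => if p.2 = i then g p.1 else 0, by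
          have : (fun p : K × Bool => if p.2 = i then g p.1 else 0)
              = fun p : K × Bool => (if p.2 = i then (1 : ℝ) else 0) * g p.1 := by
            funext p
            by_cases h : p.2 = i <;> simp [h]
          rw [this]
          exact (((continuous_of_discreteTopology
              (f := fun b : Bool => if b = i then (1 : ℝ) else 0)).comp
            continuous_snd).mul (g.continuous.comp continuous_fst))⟩
      map_add' := fun f g => by
        ext p
        by_cases h : p.2 = i <;> simp [h]
      map_smul' := fun c f => by
        ext p
        by_cases h : p.2 = i <;> simp [h] }
    1
    (fun g => by
      rw [one_mul]
      refine (ContinuousMap.norm_le _ (norm_nonneg g)).mpr fun p => ?_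
      simp only [ContinuousMap.coe_mk, LinearMap.coe_mk, AddHom.coe_mk]
      by_cases h : p.2 = i
      · simpa [h] using g.norm_coe_le_norm p.1
      · simp [h])

@[simp] theorem sigmaOp_apply {K : Type*} [TopologicalSpace K] [CompactSpace K] (i : Bool)
    (g : C(K, ℝ)) (p : K × Bool) : sigmaOp K i g p = if p.2 = i then g p.1 else 0 := rfl

section Aux
open Set in

lemma step_lemma {K : Type*} [TopologicalSpace K] [T2Space K]
    {W : Set K} (hW : IsOpen W) (hWi : W.Infinite) :
    ∃ U W' : Set K, IsOpen U ∧ U.Nonempty ∧ IsOpen W' ∧ W'.Infinite ∧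
      Disjoint U W' ∧ U ⊆ W ∧ W' ⊆ W := by
  obtain ⟨x, hx, y, hy, hxy⟩ := hWi.nontrivial
  obtain ⟨A, B, hA, hB, hxA, hyB, hAB⟩ := t2_separation hxy
  by_cases hfin : (A ∩ W).Finite
  · refine ⟨A ∩ W, W \ (A ∩ W), hA.inter hW, ⟨x, hxA, hx⟩,
      hW.sdiff hfin.isClosed, hWi.diff hfin, Set.disjoint_sdiff_right,
      Set.inter_subset_right, Set.diff_subset⟩
  · refine ⟨B ∩ W, A ∩ W, hB.inter hW, ⟨y, hyB, hy⟩, hA.inter hW,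
      hfin, ?_, Set.inter_subset_right, Set.inter_subset_right⟩
    exact Set.disjoint_of_subset Set.inter_subset_left Set.inter_subset_left hAB.symm

lemma exists_disjoint_opens (K : Type*) [TopologicalSpace K] [T2Space K] [Infinite K] :
    ∃ U : ℕ → Set K, (∀ n, IsOpen (U n)) ∧ (∀ n, (U n).Nonempty) ∧
      Pairwise (Function.onFun Disjoint U) := by
  -- build W : ℕ → subtype and U
  have step : ∀ W : {W : Set K // IsOpen W ∧ W.Infinite},
      ∃ p : Set K × Set K, IsOpen p.1 ∧ p.1.Nonempty ∧ IsOpen p.2 ∧ p.2.Infinite ∧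
        Disjoint p.1 p.2 ∧ p.1 ⊆ W.1 ∧ p.2 ⊆ W.1 := by
    rintro ⟨W, hW, hWi⟩
    obtain ⟨U, W', h1, h2, h3, h4, h5, h6, h7⟩ := step_lemma hW hWi
    exact ⟨(U, W'), h1, h2, h3, h4, h5, h6, h7⟩
  choose p hp1 hp2 hp3 hp4 hp5 hp6 hp7 using step
  let Wseq : ℕ → {W : Set K // IsOpen W ∧ W.Infinite} := fun n =>
    Nat.rec ⟨Set.univ, isOpen_univ, Set.infinite_univ⟩
      (fun _ W => ⟨(p W).2, hp3 W, hp4 W⟩) n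
  have hWsucc : ∀ n, (Wseq (n+1)).1 = (p (Wseq n)).2 := fun n => rfl
  refine ⟨fun n => (p (Wseq n)).1, fun n => hp1 _, fun n => hp2 _, ?_⟩
  have hmono : ∀ m n, m ≤ n → (Wseq n).1 ⊆ (Wseq m).1 := by
    intro m n h
    induction n with
    | zero => simp_all
    | succ k ih =>
      rcases Nat.lt_or_ge m (k+1) with h' | h'
      · exact (hp7 (Wseq k)).trans (ih (Nat.lt_succ_iff.mp h'))
      · have : m = k + 1 := le_antisymm h h'
        subst this; rfl
  have key : ∀ m n, m < n → Disjoint ((p (Wseq m)).1) ((p (Wseq n)).1) := by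
    intro m n h
    exact (hp5 (Wseq m)).mono_right (((hp6 (Wseq n)).trans (hmono (m+1) n h)))
  intro m n hmn
  rcases lt_or_gt_of_ne hmn with h | h
  · exact key m n h
  · exact (key n m h).symm

end Aux

/-- For `K` an infinite compact Hausdorff space, the swap operator on `C(K × Bool, ℝ)` is not
a weak multiplier. -/
theorem swapOp_not_weakMultiplier
    {K : Type*} [TopologicalSpace K] [CompactSpace K] [T2Space K] [Infinite K] :
    ¬ IsWeakMultiplier (swapOp K) := by
  intro hwm
  obtain ⟨U, hUo, hUne, hUd⟩ := exists_disjoint_opens K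
  choose z hz using hUne
  have hg : ∀ n, ∃ g : C(K, ℝ), g (z n) = 1 ∧ (∀ x, x ∉ U n → g x = 0) ∧
      ∀ x, g x ∈ Set.Icc (0 : ℝ) 1 := by
    intro n
    obtain ⟨g, hg0, hg1, hg01⟩ := exists_continuous_zero_one_of_isClosed
      (hUo n).isClosed_compl isClosed_singleton
      (Set.disjoint_singleton_right.mpr (fun h => h (hz n)))
    exact ⟨g, hg1 rfl, fun x hx => hg0 hx, hg01⟩
  choose g hg1 hg0 hg01 using hg
  have hgd : ∀ i j, i ≠ j → ∀ x, g i x * g j x = 0 := by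
    intro i j hij x
    by_cases hx : x ∈ U i
    · rw [hg0 j x (fun h => Set.disjoint_left.mp (hUd hij) hx h), mul_zero]
    · rw [hg0 i x hx, zero_mul]
  have key := hwm (fun n => sigmaOp K true (g n)) (fun n => (z n, false))
    ⟨1, fun n => by
      refine (ContinuousMap.norm_le _ zero_le_one).mpr fun p => ?_
      simp only [ContinuousLinearMap.coe_coe, sigmaOp_apply]
      split
      · rw [Real.norm_eq_abs, abs_le]
        exact ⟨by linarith [(hg01 n p.1).1], (hg01 n p.1).2⟩
      · simp⟩
    (fun i j hij => by
      ext p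
      simp only [ContinuousMap.mul_apply, sigmaOp_apply, ContinuousMap.zero_apply]
      split
      · exact hgd i j hij p.1
      · exact mul_zero 0)
    (fun n => by simp)
  have hone : ∀ n, (swapOp K (sigmaOp K true (g n))) (z n, false) = 1 := by
    intro n
    rw [swapOp_apply]
    simp [hg1 n]
  simp only [hone] at key
  exact one_ne_zero (tendsto_nhds_unique tendsto_const_nhds key)
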